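/- Let A be a 2×2 complex matrix A = [[1, ρ − 1/ρ],[0, −1]] with ρ > 1. Then A = L B L^{-1} where B = diag(1, −1), L = [[1, −(ρ−1/ρ)/(ρ+1/ρ)],[0, 2/(ρ+1/ρ)]], and ‖L‖·‖L^{-1}‖ = ‖A‖ = ρ (operator 2-norm). Consequently, for any function f defined at ±1, ‖f(A)‖ ≤ ρ·max(|f(1)|, |f(−1)|). -/

import Mathlib

open Matrix
open scoped Matrix.Norms.L2Operator

lemma opnorm_le_of_sq (M : Matrix (Fin 2) (Fin 2) ℂ) (c : ℝ) (hc : 0 ≤ c)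
    (h : ∀ x0 x1 : ℂ, ‖M 0 0 * x0 + M 0 1 * x1‖ ^ 2 + ‖M 1 0 * x0 + M 1 1 * x1‖ ^ 2
        ≤ c ^ 2 * (‖x0‖ ^ 2 + ‖x1‖ ^ 2)) : ‖M‖ ≤ c := by
  rw [Matrix.l2_opNorm_def]
  apply ContinuousLinearMap.opNorm_le_bound _ hc
  intro x
  have hx : ‖x‖ = Real.sqrt (‖x 0‖ ^ 2 + ‖x 1‖ ^ 2) := by
    rw [EuclideanSpace.norm_eq, Fin.sum_univ_two]
  have hMx : ‖(Matrix.toEuclideanLin.trans LinearMap.toContinuousLinearMap M) x‖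
      = Real.sqrt (‖M 0 0 * x 0 + M 0 1 * x 1‖ ^ 2 + ‖M 1 0 * x 0 + M 1 1 * x 1‖ ^ 2) := by
    rw [EuclideanSpace.norm_eq, Fin.sum_univ_two]
    congr 1
    simp [Matrix.toEuclideanLin, Matrix.mulVec, dotProduct, Fin.sum_univ_two, sq]
  rw [hx, hMx, ← Real.sqrt_sq hc, ← Real.sqrt_mul (by positivity)]
  exact Real.sqrt_le_sqrt (h (x 0) (x 1))

lemma le_opnorm_of_sq (M : Matrix (Fin 2) (Fin 2) ℂ) (c : ℝ) (v0 v1 : ℂ)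
    (hv : c ^ 2 * (‖v0‖ ^ 2 + ‖v1‖ ^ 2)
        ≤ ‖M 0 0 * v0 + M 0 1 * v1‖ ^ 2 + ‖M 1 0 * v0 + M 1 1 * v1‖ ^ 2)
    (hc : 0 ≤ c) (hne : v0 ≠ 0) : c ≤ ‖M‖ := by
  set x : EuclideanSpace ℂ (Fin 2) := (WithLp.equiv 2 _).symm ![v0, v1] with hxdef
  have key := M.l2_opNorm_mulVec x
  have hx : ‖x‖ = Real.sqrt (‖v0‖ ^ 2 + ‖v1‖ ^ 2) := by
    rw [EuclideanSpace.norm_eq, Fin.sum_univ_two]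
    rfl
  have hMx : ‖(EuclideanSpace.equiv (Fin 2) ℂ).symm <| M *ᵥ x‖
      = Real.sqrt (‖M 0 0 * v0 + M 0 1 * v1‖ ^ 2 + ‖M 1 0 * v0 + M 1 1 * v1‖ ^ 2) := by
    rw [EuclideanSpace.norm_eq, Fin.sum_univ_two]
    congr 2 <;> simp [Matrix.mulVec, dotProduct, Fin.sum_univ_two, hxdef]
  rw [hMx, hx] at key
  have hxpos : (0:ℝ) < Real.sqrt (‖v0‖ ^ 2 + ‖v1‖ ^ 2) := by
    apply Real.sqrt_pos.2
    have : 0 < ‖v0‖ := norm_pos_iff.2 hne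
    positivity
  have h1 : c * Real.sqrt (‖v0‖ ^ 2 + ‖v1‖ ^ 2)
      ≤ Real.sqrt (‖M 0 0 * v0 + M 0 1 * v1‖ ^ 2 + ‖M 1 0 * v0 + M 1 1 * v1‖ ^ 2) := by
    rw [← Real.sqrt_sq hc, ← Real.sqrt_mul (by positivity)]
    exact Real.sqrt_le_sqrt hv
  have := h1.trans key
  exact le_of_mul_le_mul_right (by linarith) hxpos

lemma opnorm_eq_of_sq (M : Matrix (Fin 2) (Fin 2) ℂ) (c : ℝ) (hc : 0 ≤ c)
    (h : ∀ x0 x1 : ℂ, ‖M 0 0 * x0 + M 0 1 * x1‖ ^ 2 + ‖M 1 0 * x0 + M 1 1 * x1‖ ^ 2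
        ≤ c ^ 2 * (‖x0‖ ^ 2 + ‖x1‖ ^ 2))
    (v0 v1 : ℂ) (hne : v0 ≠ 0)
    (hv : c ^ 2 * (‖v0‖ ^ 2 + ‖v1‖ ^ 2)
        ≤ ‖M 0 0 * v0 + M 0 1 * v1‖ ^ 2 + ‖M 1 0 * v0 + M 1 1 * v1‖ ^ 2) :
    ‖M‖ = c :=
  le_antisymm (opnorm_le_of_sq M c hc h) (le_opnorm_of_sq M c v0 v1 hv hc hne)

lemma quadA (ρ a b : ℝ) (hρ : 1 < ρ) (ha : 0 ≤ a) (hb : 0 ≤ b) :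
    (a + (ρ - 1/ρ)*b)^2 + b^2 ≤ ρ^2 * (a^2+b^2) := by
  have hρ0 : (0:ℝ) < ρ := by linarith
  have key : ρ^2 * (ρ^2*(a^2+b^2) - ((a+(ρ-1/ρ)*b)^2+b^2)) = (ρ^2-1)*(ρ*a-b)^2 := by
    field_simp; ring
  linarith [le_of_mul_le_mul_left (by linarith [key, mul_nonneg (by nlinarith : (0:ℝ) ≤ ρ^2-1) (sq_nonneg (ρ*a-b))] :
    ρ^2 * 0 ≤ ρ^2 * (ρ^2*(a^2+b^2) - ((a+(ρ-1/ρ)*b)^2+b^2))) (by positivity : (0:ℝ) < ρ^2)]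

lemma quadL (ρ a b : ℝ) (hρ : 1 < ρ) (ha : 0 ≤ a) (hb : 0 ≤ b) :
    (a + ((ρ - 1/ρ)/(ρ + 1/ρ))*b)^2 + (2/(ρ + 1/ρ))^2*b^2 ≤ (2*ρ^2/(ρ^2+1)) * (a^2+b^2) := by
  have hρ0 : (0:ℝ) < ρ := by linarith
  have hd : (0:ℝ) < ρ + 1/ρ := by positivity
  have key : (ρ^2+1)^2 * ((2*ρ^2/(ρ^2+1)) * (a^2+b^2) - ((a + ((ρ - 1/ρ)/(ρ + 1/ρ))*b)^2 + (2/(ρ + 1/ρ))^2*b^2)) = (ρ^4-1)*(a-b)^2 := by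
    field_simp; ring
  linarith [le_of_mul_le_mul_left (by linarith [key, mul_nonneg (by nlinarith [sq_nonneg (ρ*ρ-1), sq_nonneg ρ] : (0:ℝ) ≤ ρ^4-1) (sq_nonneg (a-b))] :
    (ρ^2+1)^2 * 0 ≤ (ρ^2+1)^2 * ((2*ρ^2/(ρ^2+1)) * (a^2+b^2) - ((a + ((ρ - 1/ρ)/(ρ + 1/ρ))*b)^2 + (2/(ρ + 1/ρ))^2*b^2))) (by positivity : (0:ℝ) < (ρ^2+1)^2)]

lemma quadR (ρ a b : ℝ) (hρ : 1 < ρ) (ha : 0 ≤ a) (hb : 0 ≤ b) :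
    (a + ((ρ - 1/ρ)/2)*b)^2 + ((ρ + 1/ρ)/2)^2*b^2 ≤ ((ρ^2+1)/2) * (a^2+b^2) := by
  have hρ0 : (0:ℝ) < ρ := by linarith
  have key : (4*ρ^2) * (((ρ^2+1)/2) * (a^2+b^2) - ((a + ((ρ - 1/ρ)/2)*b)^2 + ((ρ + 1/ρ)/2)^2*b^2)) = 2*(ρ^2-1)*(ρ*a-b)^2 := by
    field_simp; ring
  linarith [le_of_mul_le_mul_left (by linarith [key, mul_nonneg (mul_nonneg (by norm_num : (0:ℝ) ≤ 2) (by nlinarith : (0:ℝ) ≤ ρ^2-1)) (sq_nonneg (ρ*a-b))] :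
    (4*ρ^2) * 0 ≤ (4*ρ^2) * (((ρ^2+1)/2) * (a^2+b^2) - ((a + ((ρ - 1/ρ)/2)*b)^2 + ((ρ + 1/ρ)/2)^2*b^2))) (by positivity : (0:ℝ) < 4*ρ^2)]

/-- For `ρ > 1` and `A = [[1, ρ-1/ρ],[0,-1]]` one has `A = L B L⁻¹` with `B = diag(1,-1)`,
`L = [[1, -(ρ-1/ρ)/(ρ+1/ρ)],[0, 2/(ρ+1/ρ)]]`, and `‖L‖·‖L⁻¹‖ = ‖A‖ = ρ`; consequently
for any function `f` defined at `±1`, `‖f(A)‖ = ‖L·diag(f(1),f(-1))·L⁻¹‖ ≤ ρ·max(|f(1)|,|f(-1)|)`. -/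
theorem similarity_ellipse_example (ρ : ℝ) (hρ : 1 < ρ) :
    let A : Matrix (Fin 2) (Fin 2) ℂ := !![1, (ρ : ℂ) - 1 / ρ; 0, -1]
    let B : Matrix (Fin 2) (Fin 2) ℂ := !![1, 0; 0, -1]
    let L : Matrix (Fin 2) (Fin 2) ℂ :=
      !![1, -(((ρ : ℂ) - 1 / ρ) / ((ρ : ℂ) + 1 / ρ)); 0, 2 / ((ρ : ℂ) + 1 / ρ)]
    A = L * B * L⁻¹ ∧
    ‖L‖ * ‖L⁻¹‖ = ρ ∧ ‖A‖ = ρ ∧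
    (∀ f : ℂ → ℂ,
      ‖L * !![f 1, 0; 0, f (-1)] * L⁻¹‖ ≤ ρ * max ‖f 1‖ ‖f (-1)‖) := by
  intro A B L
  have hρ0 : (0:ℝ) < ρ := by linarith
  have hcpos : (0:ℝ) < ρ - 1/ρ := by
    rw [sub_pos, div_lt_iff₀ hρ0]; nlinarith
  have hdpos : (0:ℝ) < ρ + 1/ρ := by positivity
  have hρC : (ρ:ℂ) ≠ 0 := by exact_mod_cast hρ0.ne'
  have ecd : (ρ:ℂ) + 1/ρ = ((ρ + 1/ρ : ℝ) : ℂ) := by push_cast; ring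
  have hdC : (ρ:ℂ) + 1/ρ ≠ 0 := by
    rw [ecd]; exact_mod_cast hdpos.ne'
  have hplus : (1:ℂ) + (ρ:ℂ)^2 ≠ 0 := by
    have h0 : ((1 + ρ^2 : ℝ):ℂ) ≠ 0 := by exact_mod_cast (by positivity : (0:ℝ) < 1 + ρ^2).ne'
    push_cast at h0
    exact h0
  have hpC : (ρ:ℂ)*ρ + 1 ≠ 0 := by
    have h0 : ((ρ*ρ + 1 : ℝ):ℂ) ≠ 0 := by exact_mod_cast (by positivity : (0:ℝ) < ρ*ρ + 1).ne'
    push_cast at h0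
    exact h0
  have hsubC : (ρ:ℂ) - 1/ρ = ((ρ:ℂ)*ρ - 1)/ρ := by field_simp; try ring
  have haddC : (ρ:ℂ) + 1/ρ = ((ρ:ℂ)*ρ + 1)/ρ := by field_simp; try ring
  have hA : A = !![(1:ℂ), (ρ:ℂ) - 1/ρ; 0, -1] := rfl
  have hL : L = !![(1:ℂ), -(((ρ:ℂ) - 1/ρ)/((ρ:ℂ) + 1/ρ)); 0, 2/((ρ:ℂ) + 1/ρ)] := rfl
  have hB : B = !![(1:ℂ), 0; 0, -1] := rfl
  have hinv : L⁻¹ = !![(1:ℂ), ((ρ:ℂ) - 1/ρ)/2; 0, ((ρ:ℂ) + 1/ρ)/2] := by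
    apply Matrix.inv_eq_right_inv
    rw [hL, Matrix.one_fin_two]
    ext i j
    fin_cases i <;> fin_cases j <;>
      simp only [Matrix.mul_apply, Fin.sum_univ_two, Matrix.cons_val', Matrix.cons_val_zero,
        Matrix.cons_val_one, Matrix.head_cons, Matrix.empty_val', Matrix.cons_val_fin_one,
        Matrix.head_fin_const, Matrix.of_apply, Fin.zero_eta, Fin.mk_one, Fin.isValue,
        one_mul, zero_mul, mul_zero, mul_one, add_zero, zero_add, hsubC, haddC] <;>
      field_simp <;> try ring <;> field_simp <;> ring
  -- entry norms
  have ecA : (ρ:ℂ) - 1/ρ = ((ρ - 1/ρ : ℝ) : ℂ) := by push_cast; ring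
  have ecLd : ((ρ:ℂ) - 1/ρ)/((ρ:ℂ) + 1/ρ) = (((ρ - 1/ρ)/(ρ + 1/ρ) : ℝ) : ℂ) := by
    push_cast; ring
  have ec2d : 2/((ρ:ℂ) + 1/ρ) = ((2/(ρ + 1/ρ) : ℝ) : ℂ) := by push_cast; ring
  have ecc2 : ((ρ:ℂ) - 1/ρ)/2 = (((ρ - 1/ρ)/2 : ℝ) : ℂ) := by push_cast; ring
  have ecd2 : ((ρ:ℂ) + 1/ρ)/2 = (((ρ + 1/ρ)/2 : ℝ) : ℂ) := by push_cast; ring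
  have nA01 : ‖(ρ:ℂ) - 1/ρ‖ = ρ - 1/ρ := by
    rw [ecA, Complex.norm_real, Real.norm_eq_abs, abs_of_pos hcpos]
  have nLd : ‖((ρ:ℂ) - 1/ρ)/((ρ:ℂ) + 1/ρ)‖ = (ρ - 1/ρ)/(ρ + 1/ρ) := by
    rw [ecLd, Complex.norm_real, Real.norm_eq_abs, abs_of_pos (by positivity)]
  have n2d : ‖2/((ρ:ℂ) + 1/ρ)‖ = 2/(ρ + 1/ρ) := by
    rw [ec2d, Complex.norm_real, Real.norm_eq_abs, abs_of_pos (by positivity)]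
  have nc2 : ‖((ρ:ℂ) - 1/ρ)/2‖ = (ρ - 1/ρ)/2 := by
    rw [ecc2, Complex.norm_real, Real.norm_eq_abs, abs_of_pos (by positivity)]
  have nd2 : ‖((ρ:ℂ) + 1/ρ)/2‖ = (ρ + 1/ρ)/2 := by
    rw [ecd2, Complex.norm_real, Real.norm_eq_abs, abs_of_pos (by positivity)]
  -- norm of A
  have hnormA : ‖A‖ = ρ := by
    refine opnorm_eq_of_sq _ _ hρ0.le ?_ (((ρ - 1/ρ : ℝ)):ℂ) (((ρ^2 - 1 : ℝ)):ℂ)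
      (by exact_mod_cast hcpos.ne') ?_
    · intro x0 x1
      rw [hA]
      simp only [Matrix.cons_val', Matrix.cons_val_zero, Matrix.cons_val_one, Matrix.head_cons,
        Matrix.empty_val', Matrix.cons_val_fin_one, Matrix.head_fin_const, Matrix.of_apply,
        one_mul, zero_mul, zero_add, neg_mul, norm_neg, neg_one_mul]
      have tri : ‖x0 + ((ρ:ℂ) - 1/ρ) * x1‖ ≤ ‖x0‖ + (ρ - 1/ρ) * ‖x1‖ := by
        calc ‖x0 + ((ρ:ℂ) - 1/ρ) * x1‖ ≤ ‖x0‖ + ‖((ρ:ℂ) - 1/ρ) * x1‖ := norm_add_le _ _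
          _ = ‖x0‖ + (ρ - 1/ρ) * ‖x1‖ := by rw [norm_mul, nA01]
      have trisq := pow_le_pow_left₀ (norm_nonneg _) tri 2
      have := quadA ρ ‖x0‖ ‖x1‖ hρ (norm_nonneg _) (norm_nonneg _)
      linarith
    · rw [hA]
      simp only [Matrix.cons_val', Matrix.cons_val_zero, Matrix.cons_val_one, Matrix.head_cons,
        Matrix.empty_val', Matrix.cons_val_fin_one, Matrix.head_fin_const, Matrix.of_apply,
        one_mul, zero_mul, zero_add, neg_mul, norm_neg, neg_one_mul]
      have e1 : ((ρ - 1/ρ : ℝ):ℂ) + ((ρ:ℂ) - 1/ρ) * ((ρ^2 - 1 : ℝ):ℂ)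
          = (((ρ - 1/ρ) * ρ^2 : ℝ):ℂ) := by push_cast; field_simp; ring
      rw [e1]
      rw [Complex.norm_real, Complex.norm_real, Complex.norm_real,
        Real.norm_eq_abs, Real.norm_eq_abs, Real.norm_eq_abs,
        abs_of_pos (show (0:ℝ) < ρ - 1/ρ from hcpos),
        abs_of_pos (show (0:ℝ) < ρ^2 - 1 by nlinarith),
        abs_of_pos (show (0:ℝ) < (ρ - 1/ρ) * ρ^2 by positivity)]
      apply le_of_eq
      field_simp
      ring
  -- norm of L
  have hnormL : ‖L‖ = Real.sqrt (2*ρ^2/(ρ^2+1)) := by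
    refine opnorm_eq_of_sq _ _ (Real.sqrt_nonneg _) ?_ 1 (-1) one_ne_zero ?_
    · intro x0 x1
      rw [hL, Real.sq_sqrt (by positivity)]
      simp only [Matrix.cons_val', Matrix.cons_val_zero, Matrix.cons_val_one, Matrix.head_cons,
        Matrix.empty_val', Matrix.cons_val_fin_one, Matrix.head_fin_const, Matrix.of_apply,
        one_mul, zero_mul, zero_add, neg_mul]
      have tri : ‖x0 + -(((ρ:ℂ) - 1/ρ)/((ρ:ℂ) + 1/ρ) * x1)‖
          ≤ ‖x0‖ + (ρ - 1/ρ)/(ρ + 1/ρ) * ‖x1‖ := by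
        calc ‖x0 + -(((ρ:ℂ) - 1/ρ)/((ρ:ℂ) + 1/ρ) * x1)‖
            ≤ ‖x0‖ + ‖-(((ρ:ℂ) - 1/ρ)/((ρ:ℂ) + 1/ρ) * x1)‖ := norm_add_le _ _
          _ = ‖x0‖ + (ρ - 1/ρ)/(ρ + 1/ρ) * ‖x1‖ := by rw [norm_neg, norm_mul, nLd]
      have trisq := pow_le_pow_left₀ (norm_nonneg _) tri 2
      have hq := quadL ρ ‖x0‖ ‖x1‖ hρ (norm_nonneg _) (norm_nonneg _)
      have h2 : ‖2/((ρ:ℂ) + 1/ρ) * x1‖^2 = (2/(ρ + 1/ρ))^2 * ‖x1‖^2 := by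
        rw [norm_mul, n2d, mul_pow]
      rw [h2]
      linarith
    · rw [hL, Real.sq_sqrt (by positivity)]
      simp only [Matrix.cons_val', Matrix.cons_val_zero, Matrix.cons_val_one, Matrix.head_cons,
        Matrix.empty_val', Matrix.cons_val_fin_one, Matrix.head_fin_const, Matrix.of_apply,
        one_mul, zero_mul, zero_add, neg_mul, mul_one, mul_neg, neg_neg]
      have e1 : (1:ℂ) + ((ρ:ℂ) - 1/ρ)/((ρ:ℂ) + 1/ρ)
          = ((1 + (ρ - 1/ρ)/(ρ + 1/ρ) : ℝ):ℂ) := by push_cast; ring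
      have e2 : -(2/((ρ:ℂ) + 1/ρ)) = ((-(2/(ρ + 1/ρ)) : ℝ):ℂ) := by push_cast; ring
      rw [e1, e2, Complex.norm_real, Complex.norm_real, norm_one, norm_neg, norm_one,
        Real.norm_eq_abs, Real.norm_eq_abs,
        abs_of_pos (show (0:ℝ) < 1 + (ρ - 1/ρ)/(ρ + 1/ρ) by positivity), abs_of_neg (neg_lt_zero.mpr (show (0:ℝ) < 2/(ρ + 1/ρ) by positivity))]
      apply le_of_eq
      field_simp
      ring
  -- norm of L⁻¹
  have hnormLinv : ‖L⁻¹‖ = Real.sqrt ((ρ^2+1)/2) := by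
    rw [hinv]
    refine opnorm_eq_of_sq _ _ (Real.sqrt_nonneg _) ?_ 1 ((ρ:ℝ):ℂ) one_ne_zero ?_
    · intro x0 x1
      rw [Real.sq_sqrt (by positivity)]
      simp only [Matrix.cons_val', Matrix.cons_val_zero, Matrix.cons_val_one, Matrix.head_cons,
        Matrix.empty_val', Matrix.cons_val_fin_one, Matrix.head_fin_const, Matrix.of_apply,
        one_mul, zero_mul, zero_add]
      have tri : ‖x0 + ((ρ:ℂ) - 1/ρ)/2 * x1‖ ≤ ‖x0‖ + (ρ - 1/ρ)/2 * ‖x1‖ := by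
        calc ‖x0 + ((ρ:ℂ) - 1/ρ)/2 * x1‖ ≤ ‖x0‖ + ‖((ρ:ℂ) - 1/ρ)/2 * x1‖ := norm_add_le _ _
          _ = ‖x0‖ + (ρ - 1/ρ)/2 * ‖x1‖ := by rw [norm_mul, nc2]
      have trisq := pow_le_pow_left₀ (norm_nonneg _) tri 2
      have hq := quadR ρ ‖x0‖ ‖x1‖ hρ (norm_nonneg _) (norm_nonneg _)
      have h2 : ‖((ρ:ℂ) + 1/ρ)/2 * x1‖^2 = ((ρ + 1/ρ)/2)^2 * ‖x1‖^2 := by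
        rw [norm_mul, nd2, mul_pow]
      rw [h2]
      linarith
    · rw [Real.sq_sqrt (by positivity)]
      simp only [Matrix.cons_val', Matrix.cons_val_zero, Matrix.cons_val_one, Matrix.head_cons,
        Matrix.empty_val', Matrix.cons_val_fin_one, Matrix.head_fin_const, Matrix.of_apply,
        one_mul, zero_mul, zero_add, mul_one]
      have e1 : (1:ℂ) + ((ρ:ℂ) - 1/ρ)/2 * ((ρ:ℝ):ℂ)
          = ((1 + (ρ - 1/ρ)/2 * ρ : ℝ):ℂ) := by push_cast; ring
      have e2 : ((ρ:ℂ) + 1/ρ)/2 * ((ρ:ℝ):ℂ) = (((ρ + 1/ρ)/2 * ρ : ℝ):ℂ) := by push_cast; ring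
      rw [e1, e2, Complex.norm_real, Complex.norm_real, norm_one,
        Real.norm_eq_abs, Real.norm_eq_abs, Complex.norm_real, Real.norm_eq_abs,
        abs_of_pos (show (0:ℝ) < 1 + (ρ - 1/ρ)/2 * ρ by nlinarith),
        abs_of_pos (show (0:ℝ) < (ρ + 1/ρ)/2 * ρ by positivity),
        abs_of_pos (show (0:ℝ) < ρ from hρ0)]
      apply le_of_eq
      field_simp
      ring
  -- product of norms
  have hprod : ‖L‖ * ‖L⁻¹‖ = ρ := by
    rw [hnormL, hnormLinv, ← Real.sqrt_mul (by positivity)]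
    rw [show 2*ρ^2/(ρ^2+1) * ((ρ^2+1)/2) = ρ^2 by field_simp]
    exact Real.sqrt_sq hρ0.le
  refine ⟨?_, hprod, hnormA, ?_⟩
  · -- A = L * B * L⁻¹
    rw [hinv, hL, hB, hA]
    ext i j
    fin_cases i <;> fin_cases j <;>
      simp only [Matrix.mul_apply, Fin.sum_univ_two, Matrix.cons_val', Matrix.cons_val_zero,
        Matrix.cons_val_one, Matrix.head_cons, Matrix.empty_val', Matrix.cons_val_fin_one,
        Matrix.head_fin_const, Matrix.of_apply, Fin.zero_eta, Fin.mk_one, Fin.isValue,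
        one_mul, zero_mul, mul_zero, mul_one, add_zero, zero_add, hsubC, haddC] <;>
      field_simp <;> try ring <;> field_simp <;> ring
  · -- the functional calculus bound
    intro f
    set M : ℝ := max ‖f 1‖ ‖f (-1)‖ with hM
    have hM0 : (0:ℝ) ≤ M := le_trans (norm_nonneg _) (le_max_left _ _)
    have hD : ‖!![f 1, 0; 0, f (-1)]‖ ≤ M := by
      apply opnorm_le_of_sq _ _ hM0
      intro x0 x1
      simp only [Matrix.cons_val', Matrix.cons_val_zero, Matrix.cons_val_one, Matrix.head_cons,
        Matrix.empty_val', Matrix.cons_val_fin_one, Matrix.head_fin_const, Matrix.of_apply,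
        zero_mul, add_zero, zero_add]
      have h1 : ‖f 1‖ ≤ M := by exact le_max_left _ _
      have h2 : ‖f (-1)‖ ≤ M := by exact le_max_right _ _
      have k1 : ‖f 1‖^2 * ‖x0‖^2 ≤ M^2 * ‖x0‖^2 :=
        mul_le_mul_of_nonneg_right (pow_le_pow_left₀ (norm_nonneg _) h1 2) (sq_nonneg _)
      have k2 : ‖f (-1)‖^2 * ‖x1‖^2 ≤ M^2 * ‖x1‖^2 :=
        mul_le_mul_of_nonneg_right (pow_le_pow_left₀ (norm_nonneg _) h2 2) (sq_nonneg _)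
      rw [norm_mul, norm_mul, mul_pow, mul_pow]
      linarith
    calc ‖L * !![f 1, 0; 0, f (-1)] * L⁻¹‖
        ≤ ‖L * !![f 1, 0; 0, f (-1)]‖ * ‖L⁻¹‖ := Matrix.l2_opNorm_mul _ _
      _ ≤ (‖L‖ * ‖!![f 1, 0; 0, f (-1)]‖) * ‖L⁻¹‖ :=
          mul_le_mul_of_nonneg_right (Matrix.l2_opNorm_mul _ _) (norm_nonneg _)
      _ = (‖L‖ * ‖L⁻¹‖) * ‖!![f 1, 0; 0, f (-1)]‖ := by ring
      _ = ρ * ‖!![f 1, 0; 0, f (-1)]‖ := by rw [hprod]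
      _ ≤ ρ * M := mul_le_mul_of_nonneg_left hD hρ0.le
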